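/- Let d ≥ 2 be an integer and α ∈ (0,2). Set m_α = 2^α Γ(2+α/2) Γ((d+α)/2)/Γ(d/2) and ℓ_α = 2^{α/2} Γ(1+α/2) (1+α/2)^{−α/2} · ((d+α)^{1+α/2}/d) · Γ((d+α)/2)/Γ(d/2). Then for every s ∈ [0,1] one has ℓ_α (1−s)^{1+α/2} ≥ m_α (1 − ((d+α)/d) s), with equality at s₀ = (d−2)/(d+α); in fact ℓ_α is the least constant for which this inequality holds for all s ∈ [0,1]. -/

import Mathlib

open Real

/-- `m_α = 2^α Γ(2+α/2) Γ((d+α)/2)/Γ(d/2)`. -/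
noncomputable def mConst (d : ℕ) (α : ℝ) : ℝ :=
  2 ^ α * Gamma (2 + α / 2) * Gamma (((d : ℝ) + α) / 2) / Gamma ((d : ℝ) / 2)

/-- `ℓ_α = 2^{α/2} Γ(1+α/2) (1+α/2)^{-α/2} ((d+α)^{1+α/2}/d) Γ((d+α)/2)/Γ(d/2)`. -/
noncomputable def ellConst (d : ℕ) (α : ℝ) : ℝ :=
  2 ^ (α / 2) * Gamma (1 + α / 2) / (1 + α / 2) ^ (α / 2) *
    (((d : ℝ) + α) ^ (1 + α / 2) / d) * (Gamma (((d : ℝ) + α) / 2) / Gamma ((d : ℝ) / 2))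

/-- `ℓ_α` is the least constant such that
`ℓ (1-s)^{1+α/2} ≥ m_α (1 - ((d+α)/d)s)` on `[0,1]`; equality holds at `s₀ = (d-2)/(d+α)`. -/
theorem ell_least_constant (d : ℕ) (hd : 2 ≤ d) (α : ℝ) (hα : α ∈ Set.Ioo (0:ℝ) 2) :
    (∀ s ∈ Set.Icc (0:ℝ) 1,
      ellConst d α * (1 - s) ^ (1 + α / 2) ≥ mConst d α * (1 - ((d : ℝ) + α) / d * s)) ∧
    ellConst d α * (1 - ((d : ℝ) - 2) / (d + α)) ^ (1 + α / 2) =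
      mConst d α * (1 - ((d : ℝ) + α) / d * (((d : ℝ) - 2) / (d + α))) ∧
    (∀ ℓ' : ℝ,
      (∀ s ∈ Set.Icc (0:ℝ) 1,
        ℓ' * (1 - s) ^ (1 + α / 2) ≥ mConst d α * (1 - ((d : ℝ) + α) / d * s)) →
      ellConst d α ≤ ℓ') := by
  obtain ⟨hα0, hα2⟩ := hα
  have hd2 : (2:ℝ) ≤ (d:ℝ) := by exact_mod_cast hd
  have hdpos : (0:ℝ) < d := by linarith
  have hda : (0:ℝ) < (d:ℝ) + α := by linarith
  have h2a : (0:ℝ) < 2 + α := by linarith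
  set p : ℝ := 1 + α / 2 with hp
  have hp1 : (1:ℝ) ≤ p := by rw [hp]; linarith
  have hppos : (0:ℝ) < p := by linarith
  set s₀ : ℝ := ((d:ℝ) - 2) / ((d:ℝ) + α) with hs₀
  set c : ℝ := ((d:ℝ) + α) / d with hc
  have hA : (1:ℝ) - s₀ = (2 + α) / ((d:ℝ) + α) := by
    rw [hs₀]; field_simp; ring
  have hApos : (0:ℝ) < 1 - s₀ := by rw [hA]; positivity
  have hB : (1:ℝ) - c * s₀ = 2 / d := by
    rw [hc, hs₀]; field_simp; ring
  have hΓD : Gamma ((d:ℝ)/2) ≠ 0 := (Gamma_pos_of_pos (by positivity)).ne'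
  have hdap : (0:ℝ) < ((d:ℝ) + α) ^ p := Real.rpow_pos_of_pos hda p
  have hpap : (0:ℝ) < p ^ (α / 2) := Real.rpow_pos_of_pos hppos _
  -- the key Gamma identity
  have hE : ellConst d α * (1 - s₀) ^ p = mConst d α * (1 - c * s₀) := by
    have h1 : ((2 + α) / ((d:ℝ) + α)) ^ p = (2 + α) ^ p / ((d:ℝ) + α) ^ p :=
      Real.div_rpow h2a.le hda.le p
    have h2 : (2 + α : ℝ) ^ p = 2 ^ p * p ^ p := by
      rw [show (2 + α : ℝ) = 2 * p by rw [hp]; ring,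
        Real.mul_rpow (by norm_num) hppos.le]
    have h3 : p ^ p = p * p ^ (α / 2) := by
      have : p ^ p / p ^ (α/2) = p := by
        rw [← Real.rpow_sub hppos, show p - α/2 = 1 by rw [hp]; ring, Real.rpow_one]
      field_simp at this; linarith [this]
    have h4 : Gamma (2 + α / 2) = p * Gamma p := by
      rw [show (2 : ℝ) + α / 2 = p + 1 by rw [hp]; ring, Real.Gamma_add_one hppos.ne']
    have h5 : (2:ℝ) ^ α = 2 ^ (α / 2) * 2 ^ p / 2 := by
      rw [← Real.rpow_add (by norm_num : (0:ℝ) < 2),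
        show α / 2 + p = α + 1 by rw [hp]; ring,
        Real.rpow_add (by norm_num : (0:ℝ) < 2), Real.rpow_one]
      ring
    rw [hA, hB, ellConst, mConst, ← hp, h1, h2, h3, h4, h5]
    field_simp
  have hT : p * (1 - c * s₀) = c * (1 - s₀) := by
    rw [hA, hB, hp, hc]; field_simp
  have hellpos : 0 < ellConst d α := by
    rw [ellConst]
    have g1 := Gamma_pos_of_pos (show (0:ℝ) < 1 + α/2 by linarith)
    have g2 := Gamma_pos_of_pos (show (0:ℝ) < ((d:ℝ)+α)/2 by positivity)
    have g3 := Gamma_pos_of_pos (show (0:ℝ) < (d:ℝ)/2 by positivity)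
    have g4 : (0:ℝ) < ((d:ℝ)+α) ^ (1 + α/2) := Real.rpow_pos_of_pos hda _
    have g5 : (0:ℝ) < (2:ℝ) ^ (α/2) := Real.rpow_pos_of_pos (by norm_num) _
    have g6 : (0:ℝ) < ((1:ℝ) + α/2) ^ (α/2) :=
      Real.rpow_pos_of_pos (by linarith) _
    positivity
  have hmpos : 0 < mConst d α := by
    rw [mConst]
    have g1 := Gamma_pos_of_pos (show (0:ℝ) < 2 + α/2 by linarith)
    have g2 := Gamma_pos_of_pos (show (0:ℝ) < ((d:ℝ)+α)/2 by positivity)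
    have g3 := Gamma_pos_of_pos (show (0:ℝ) < (d:ℝ)/2 by positivity)
    have g5 : (0:ℝ) < (2:ℝ) ^ α := Real.rpow_pos_of_pos (by norm_num) _
    positivity
  -- main inequality
  have hmain : ∀ s ∈ Set.Icc (0:ℝ) 1,
      ellConst d α * (1 - s) ^ p ≥ mConst d α * (1 - c * s) := by
    intro s hs
    obtain ⟨hs0, hs1⟩ := hs
    set t : ℝ := (s₀ - s) / (1 - s₀) with hts
    have ht1 : (-1:ℝ) ≤ t := by
      rw [hts, le_div_iff₀ hApos]; linarith
    have h1t : (0:ℝ) ≤ 1 + t := by linarith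
    have hfac : 1 - s = (1 - s₀) * (1 + t) := by
      rw [hts]; field_simp; ring
    have hAt : (1 - s₀) * t = s₀ - s := by
      rw [hts]; field_simp
    have hb : 1 + p * t ≤ (1 + t) ^ p := one_add_mul_self_le_rpow_one_add ht1 hp1
    have hLA : 0 ≤ ellConst d α * (1 - s₀) ^ p :=
      le_of_lt (mul_pos hellpos (Real.rpow_pos_of_pos hApos p))
    calc ellConst d α * (1 - s) ^ p
        = (ellConst d α * (1 - s₀) ^ p) * (1 + t) ^ p := by
          rw [hfac, Real.mul_rpow hApos.le h1t]; ring
      _ ≥ (ellConst d α * (1 - s₀) ^ p) * (1 + p * t) :=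
          mul_le_mul_of_nonneg_left hb hLA
      _ = mConst d α * (1 - c * s₀) + mConst d α * ((p * (1 - c * s₀)) * t) := by
          rw [hE]; ring
      _ = mConst d α * (1 - c * s₀) + mConst d α * (c * ((1 - s₀) * t)) := by
          rw [hT]; ring
      _ = mConst d α * (1 - c * s) := by rw [hAt]; ring
  have hs₀mem : s₀ ∈ Set.Icc (0:ℝ) 1 := by
    constructor
    · rw [hs₀]; exact div_nonneg (by linarith) hda.le
    · rw [hs₀, div_le_one hda]; linarith
  refine ⟨hmain, hE, ?_⟩
  intro ℓ' h
  have h0 := h s₀ hs₀mem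
  rw [← hE] at h0
  exact le_of_mul_le_mul_right h0 (Real.rpow_pos_of_pos hApos p)
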